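/- For each fixed j, the formal power series identity ∏_{r=1}^{j} 1/(1 - r(r+2γ-1)x) = Σ_{n≥j} JS(n,j) x^{n-j} holds; equivalently, JS(n,j) is the coefficient of x^{n-j} in ∏_{r=1}^{j} (1 - r(r+2γ-1)x)^{-1}. -/

import Mathlib

/-- Jacobi-Stirling numbers of the second kind, defined by the triangular
recurrence and initial conditions. -/
def JS {R : Type*} [CommRing R] (γ : R) : ℕ → ℕ → R
  | 0, 0 => 1
  | _ + 1, 0 => 0
  | 0, _ + 1 => 0
  | n + 1, j + 1 => JS γ n j + ((j : R) + 1) * (((j : R) + 1) + 2 * γ - 1) * JS γ n (j + 1)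

lemma JS_eq_zero_of_lt {R : Type*} [CommRing R] (γ : R) :
    ∀ n j : ℕ, n < j → JS γ n j = 0 := by
  intro n
  induction n with
  | zero => intro j hj; cases j with
    | zero => omega
    | succ k => rfl
  | succ n ih =>
    intro j hj
    cases j with
    | zero => omega
    | succ k =>
      show JS γ n k + ((k : R) + 1) * (((k : R) + 1) + 2 * γ - 1) * JS γ n (k + 1) = 0
      rw [ih k (by omega), ih (k + 1) (by omega)]
      ring

lemma JS_step {R : Type*} [CommRing R] (γ : R) (j : ℕ) :
    (1 - PowerSeries.C (((j : R) + 1) * (((j : R) + 1) + 2 * γ - 1)) * PowerSeries.X) *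
      PowerSeries.mk (fun n => JS γ (n + (j + 1)) (j + 1)) =
      PowerSeries.mk (fun n => JS γ (n + j) j) := by
  ext n
  rw [sub_mul, one_mul, mul_assoc, map_sub, PowerSeries.coeff_C_mul]
  cases n with
  | zero =>
    simp only [PowerSeries.coeff_zero_eq_constantCoeff, map_mul,
      PowerSeries.constantCoeff_X, zero_mul, mul_zero, sub_zero, PowerSeries.coeff_mk]
    rw [Nat.zero_add, Nat.zero_add]
    show JS γ j j + ((j : R) + 1) * (((j : R) + 1) + 2 * γ - 1) * JS γ j (j + 1) = JS γ j j
    rw [JS_eq_zero_of_lt γ j (j + 1) (by omega)]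
    ring
  | succ n =>
    rw [PowerSeries.coeff_succ_X_mul, PowerSeries.coeff_mk, PowerSeries.coeff_mk,
      PowerSeries.coeff_mk]
    rw [show n + 1 + (j + 1) = (n + (j + 1)) + 1 from by omega,
      show n + 1 + j = n + (j + 1) from by omega]
    show JS γ (n + (j + 1)) j
        + ((j : R) + 1) * (((j : R) + 1) + 2 * γ - 1) * JS γ (n + (j + 1)) (j + 1)
        - ((j : R) + 1) * (((j : R) + 1) + 2 * γ - 1) * JS γ (n + (j + 1)) (j + 1)
        = JS γ (n + (j + 1)) j
    ring

/-- Rational generating function: `Σ_{n ≥ j} JS(n,j) x^{n-j}` is the multiplicative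
inverse of `∏_{r=1}^{j} (1 - r(r+2γ-1)x)` as a formal power series. -/
theorem JS_rational_generating_function {R : Type*} [CommRing R] (γ : R) (j : ℕ) :
    (∏ r ∈ Finset.Icc 1 j,
        (1 - PowerSeries.C ((r : R) * ((r : R) + 2 * γ - 1)) * PowerSeries.X)) *
      PowerSeries.mk (fun n => JS γ (n + j) j) = 1 := by
  induction j with
  | zero =>
    rw [Finset.Icc_eq_empty (by omega), Finset.prod_empty, one_mul]
    ext n
    cases n with
    | zero => simp [JS]
    | succ n => simp [JS, PowerSeries.coeff_one]
  | succ j ih =>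
    rw [Finset.prod_Icc_succ_top (by omega : 1 ≤ j + 1)]
    have h := JS_step γ j
    push_cast at h ⊢
    rw [mul_assoc, h, ih]
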